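/- arXiv:2205.00918 — 2 statements merged into one kernel-verified Lean document; each statement's English description precedes it below -/
import Mathlib

section
/- Aliasing identity for bivariate Gauss–Chebyshev quadrature: if f has absolutely convergent bivariate Chebyshev series with coefficients c_{i,j}, and c̃_{i,j} denotes the discrete coefficient computed from the n_x × n_y tensor grid of Chebyshev roots, then c̃_{i,j} = c_{i,j} + ∑_{k_x≥1} (−1)^{k_x}(c_{2k_x n_x − i, j} + c_{2k_x n_x + i, j}) + ∑_{k_y≥1} (−1)^{k_y}(c_{i, 2k_y n_y − j} + c_{i, 2k_y n_y + j}) + ∑_{k_x≥1} ∑_{k_y≥1} (−1)^{k_x+k_y}(c_{2k_x n_x − i, 2k_y n_y − j} + c_{2k_x n_x − i, 2k_y n_y + j} + c_{2k_x n_x + i, 2k_y n_y − j} + c_{2k_x n_x + i, 2k_y n_y + j}). -/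
open Real Finset

/-- Chebyshev polynomial `T_n` on `[-1,1]`. -/
noncomputable def T (n : ℕ) (x : ℝ) : ℝ := Real.cos (n * Real.arccos x)

/-- Halving weight for the primed sums. -/
noncomputable def w (n : ℕ) : ℝ := if n = 0 then 1 / 2 else 1

/-- The `l`-th root of the Chebyshev polynomial `T_n` (for `1 ≤ l ≤ n`). -/
noncomputable def chebNode (n l : ℕ) : ℝ := Real.cos ((2 * (l : ℝ) - 1) * π / (2 * n))

/-- Discrete (quadrature) bivariate Chebyshev coefficient on an `n_x × n_y` grid. -/
noncomputable def ctilde (f : ℝ → ℝ → ℝ) (nx ny i j : ℕ) : ℝ :=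
  (4 / ((nx : ℝ) * ny)) * ∑ lx ∈ Finset.Icc 1 nx, ∑ ly ∈ Finset.Icc 1 ny,
    f (chebNode nx lx) (chebNode ny ly) * T i (chebNode nx lx) * T j (chebNode ny ly)

/-! ### Auxiliary: the basic trigonometric quadrature sum -/

noncomputable def S (n m : ℕ) : ℝ :=
  ∑ l ∈ Finset.Icc 1 n, Real.cos (m * ((2*(l:ℝ)-1)*π/(2*n)))

lemma cos_natmul_pi (N : ℕ) : Real.cos (N * π) = (-1:ℝ)^N := by
  have := Real.cos_add_nat_mul_pi 0 N
  simpa using this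

lemma S_eq (n m : ℕ) (hn : 1 ≤ n) :
    S n m = if 2*n ∣ m then (n:ℝ) * (-1)^(m/(2*n)) else 0 := by
  have hn0 : (n:ℝ) ≠ 0 := Nat.cast_ne_zero.2 (by omega)
  set α : ℝ := m * π / (2*n) with hα
  have hS : S n m = ∑ l ∈ Finset.range n, Real.cos ((2*(l:ℝ)+1) * α) := by
    rw [S, show Finset.Icc 1 n = Finset.Ico 1 (n+1) by rfl, Finset.sum_Ico_eq_sum_range]
    simp only [Nat.add_sub_cancel]
    apply Finset.sum_congr rfl
    intro l _
    congr 1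
    push_cast [hα]
    field_simp
    ring
  split_ifs with h
  · obtain ⟨k, hk⟩ := h
    have hαk : α = k * π := by
      rw [hα, hk]; push_cast; field_simp
    have hk' : m / (2*n) = k := by
      rw [hk, Nat.mul_div_cancel_left _ (by omega)]
    rw [hS, hk']
    have hc : ∀ l ∈ Finset.range n, Real.cos ((2*(l:ℝ)+1) * α) = (-1:ℝ)^k := by
      intro l _
      rw [hαk, show (2*(l:ℝ)+1) * ((k:ℝ) * π) = ((2*l+1)*k : ℕ) * π by push_cast; ring,
        cos_natmul_pi]
      rw [show (2*l+1)*k = k + 2*(l*k) by ring, pow_add, pow_mul]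
      norm_num
    rw [Finset.sum_congr rfl hc, Finset.sum_const, Finset.card_range, nsmul_eq_mul]
  · have hsα : Real.sin α ≠ 0 := by
      intro h0
      obtain ⟨z, hz⟩ := Real.sin_eq_zero_iff.1 h0
      apply h
      rw [hα] at hz
      have h2n : (2*(n:ℝ)) ≠ 0 := by positivity
      rw [eq_div_iff h2n] at hz
      have h3 : ((z:ℝ)*(2*n)) * π = (m:ℝ) * π := by linear_combination hz
      have hm : (m:ℝ) = 2*n*z := by
        have h4 := mul_right_cancel₀ Real.pi_ne_zero h3
        linarith
      have hz0 : 0 ≤ z := by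
        by_contra hz0
        push_neg at hz0
        have hzr : (z:ℝ) < 0 := by exact_mod_cast hz0
        have hnpos : (0:ℝ) < n := by positivity
        have hp : 0 < (2*(n:ℝ)) * (-(z:ℝ)) := mul_pos (by positivity) (by linarith)
        have : (m:ℝ) < 0 := by nlinarith
        exact absurd this (not_lt.2 (by positivity))
      lift z to ℕ using hz0 with zn
      exact ⟨zn, by exact_mod_cast hm⟩
    have htel : ∑ l ∈ Finset.range n,
        (Real.sin (2*((l:ℝ)+1)*α) - Real.sin (2*(l:ℝ)*α)) = Real.sin (2*(n:ℝ)*α) := by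
      have h := Finset.sum_range_sub (fun l : ℕ => Real.sin (2*(l:ℝ)*α)) n
      push_cast at h
      simpa using h
    have hterm : ∀ l ∈ Finset.range n, 2 * Real.sin α * Real.cos ((2*(l:ℝ)+1)*α)
        = Real.sin (2*((l:ℝ)+1)*α) - Real.sin (2*(l:ℝ)*α) := by
      intro l _
      have h1 : 2*((l:ℝ)+1)*α = (2*(l:ℝ)+1)*α + α := by ring
      have h2 : 2*(l:ℝ)*α = (2*(l:ℝ)+1)*α - α := by ring
      rw [h1, h2, Real.sin_add, Real.sin_sub]
      ring
    have hzero : Real.sin (2*(n:ℝ)*α) = 0 := by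
      have he : 2*(n:ℝ)*α = m * π := by rw [hα]; field_simp
      rw [he, Real.sin_nat_mul_pi]
    have key : (2 * Real.sin α) * ∑ l ∈ Finset.range n, Real.cos ((2*(l:ℝ)+1) * α) = 0 := by
      rw [Finset.mul_sum, Finset.sum_congr rfl hterm, htel, hzero]
    rw [hS]
    rcases mul_eq_zero.1 key with h' | h'
    · exact absurd h' (by simp [hsα])
    · exact h'

/-! ### Node evaluation -/

lemma theta_mem (n l : ℕ) (hn : 1 ≤ n) (hl : l ∈ Finset.Icc 1 n) :
    0 ≤ (2*(l:ℝ)-1)*π/(2*n) ∧ (2*(l:ℝ)-1)*π/(2*n) ≤ π := by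
  simp only [Finset.mem_Icc] at hl
  have h1 : (1:ℝ) ≤ l := by exact_mod_cast hl.1
  have h2 : (l:ℝ) ≤ n := by exact_mod_cast hl.2
  have hnp : (0:ℝ) < n := by exact_mod_cast Nat.lt_of_lt_of_le Nat.zero_lt_one hn
  constructor
  · apply div_nonneg (by nlinarith [Real.pi_pos]) (by linarith)
  · rw [div_le_iff₀ (by linarith)]
    nlinarith [Real.pi_pos]

lemma T_node (n l a : ℕ) (hn : 1 ≤ n) (hl : l ∈ Finset.Icc 1 n) :
    T a (chebNode n l) = Real.cos (a * ((2*(l:ℝ)-1)*π/(2*n))) := by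
  obtain ⟨h0, hπ⟩ := theta_mem n l hn hl
  rw [T, chebNode, Real.arccos_cos h0 hπ]

lemma chebNode_mem (n l : ℕ) : chebNode n l ∈ Set.Icc (-1:ℝ) 1 :=
  ⟨Real.neg_one_le_cos _, Real.cos_le_one _⟩

lemma T_abs_le (a : ℕ) (x : ℝ) : |T a x| ≤ 1 := Real.abs_cos_le_one _
lemma w_abs_le (a : ℕ) : |w a| ≤ 1 := by rw [w]; split_ifs <;> rw [abs_le] <;> norm_num

lemma sum_TT (n a b : ℕ) (hn : 1 ≤ n) (hba : b ≤ a) :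
    ∑ l ∈ Finset.Icc 1 n, T a (chebNode n l) * T b (chebNode n l)
      = (S n (a+b) + S n (a-b))/2 := by
  rw [S, S, ← Finset.sum_add_distrib, Finset.sum_div]
  apply Finset.sum_congr rfl
  intro l hl
  rw [T_node n l a hn hl, T_node n l b hn hl]
  set θ := (2*(l:ℝ)-1)*π/(2*n)
  have h1 : ((a+b:ℕ):ℝ) * θ = a*θ + b*θ := by push_cast; ring
  have h2 : ((a-b:ℕ):ℝ) * θ = a*θ - b*θ := by
    have : ((a-b:ℕ):ℝ) = a - b := by push_cast [hba]; ring
    rw [this]; ring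
  rw [h1, h2, Real.cos_add, Real.cos_sub]
  ring

/-! ### The aliasing coefficient -/

noncomputable def A1 (n i a : ℕ) : ℝ :=
  if 2*n ∣ (a+i) ∧ a + i ≠ 0 then (-1:ℝ)^((a+i)/(2*n)) else 0
noncomputable def A2 (n i a : ℕ) : ℝ :=
  if i < a ∧ 2*n ∣ (a-i) then (-1:ℝ)^((a-i)/(2*n)) else 0
noncomputable def A (n i a : ℕ) : ℝ := A1 n i a + A2 n i a

lemma key (n i a : ℕ) (hn : 1 ≤ n) (hi : i ≤ n) :
    w a * ((2:ℝ)/n * ∑ l ∈ Finset.Icc 1 n, T a (chebNode n l) * T i (chebNode n l))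
      = (if a = i then 1 else 0) + A n i a := by
  have hn0 : (n:ℝ) ≠ 0 := Nat.cast_ne_zero.2 (by omega)
  rw [A, A1, A2]
  rcases le_or_gt i a with hia | hia
  · rw [sum_TT n a i hn hia, S_eq n (a+i) hn, S_eq n (a-i) hn]
    rcases eq_or_lt_of_le hia with heq | hlt
    · subst heq
      simp only [Nat.sub_self, if_pos rfl, Nat.dvd_zero, if_pos trivial, Nat.zero_div, pow_zero,
        lt_irrefl, false_and, if_neg (not_and_of_not_left _ (lt_irrefl i))]
      rcases Nat.eq_zero_or_pos i with h0 | hpos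
      · subst h0
        simp [w]
        field_simp
      · have hw : w i = 1 := by rw [w, if_neg (by omega)]
        rcases eq_or_lt_of_le hi with hin | hin
        · have hd : 2*n ∣ i + i := ⟨1, by omega⟩
          have hq : (i+i)/(2*n) = 1 := by
            rw [show i+i = 2*n*1 by omega, Nat.mul_div_cancel_left _ (by omega)]
          rw [hw, if_pos hd, hq, if_pos (show 2*n ∣ i+i ∧ i+i ≠ 0 from ⟨hd, by omega⟩)]
          field_simp
          norm_num
        · have hd : ¬ (2*n ∣ i + i) := by
            intro ⟨k, hk⟩
            rcases k with _ | k
            · omega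
            · have : 2*n*1 ≤ 2*n*(k+1) := Nat.mul_le_mul_left _ (by omega)
              omega
          rw [hw, if_neg hd, if_neg (fun h => hd h.1)]
          field_simp
          norm_num
    · have hw : w a = 1 := by rw [w, if_neg (by omega)]
      have hane : ¬ (a = i) := by omega
      have e1 : (2*n ∣ a+i ∧ a+i ≠ 0) ↔ (2*n ∣ a+i) := and_iff_left (by omega)
      have e2 : (i < a ∧ 2*n ∣ a-i) ↔ (2*n ∣ a-i) := and_iff_right hlt
      rw [hw, if_neg hane]
      simp only [e1, e2]
      split_ifs <;> field_simp <;> ring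
  · have h1 : ∑ l ∈ Finset.Icc 1 n, T a (chebNode n l) * T i (chebNode n l)
        = (S n (i+a) + S n (i-a))/2 := by
      rw [← sum_TT n i a hn (le_of_lt hia)]
      apply Finset.sum_congr rfl
      intro l hl; ring
    rw [h1, S_eq n (i+a) hn, S_eq n (i-a) hn]
    have hd1 : ¬ (2*n ∣ (i+a)) := by
      rintro ⟨k, hk⟩
      rcases k with _ | k
      · omega
      · have : 2*n*1 ≤ 2*n*(k+1) := Nat.mul_le_mul_left _ (by omega)
        omega
    have hd2 : ¬ (2*n ∣ (i-a)) := by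
      rintro ⟨k, hk⟩
      rcases k with _ | k
      · omega
      · have : 2*n*1 ≤ 2*n*(k+1) := Nat.mul_le_mul_left _ (by omega)
        omega
    have hd3 : ¬ (2*n ∣ (a+i) ∧ a + i ≠ 0) := by
      rintro ⟨hd, _⟩; exact hd1 (by rwa [Nat.add_comm] at hd)
    have hne : ¬ (a = i) := by omega
    have hni : ¬ (i < a ∧ 2*n ∣ (a-i)) := fun h => absurd h.1 (by omega)
    rw [if_neg hd1, if_neg hd2, if_neg hd3, if_neg hne, if_neg hni]
    ring

/-! ### Reindexing lemmas -/

lemma le_mul_aux (n k : ℕ) : n ≤ 2*(k+1)*n := by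
  calc n = 1*n := (one_mul n).symm
  _ ≤ 2*(k+1)*n := Nat.mul_le_mul_right n (by omega)

lemma phi1_inj (n i : ℕ) (hn : 1 ≤ n) (hi : i ≤ n) :
    Function.Injective (fun k => 2*(k+1)*n - i) := by
  have : StrictMono (fun k => 2*(k+1)*n - i) := by
    intro k l hkl
    have hi' : i ≤ 2*(k+1)*n := le_trans hi (le_mul_aux n k)
    have hmul : 2*(k+1)*n < 2*(l+1)*n :=
      Nat.mul_lt_mul_of_lt_of_le (by omega) (le_refl n) (by omega)
    show 2*(k+1)*n - i < 2*(l+1)*n - i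
    omega
  exact this.injective

lemma phi2_inj (n i : ℕ) (hn : 1 ≤ n) :
    Function.Injective (fun k => 2*(k+1)*n + i) := by
  have : StrictMono (fun k => 2*(k+1)*n + i) := by
    intro k l hkl
    have hmul : 2*(k+1)*n < 2*(l+1)*n :=
      Nat.mul_lt_mul_of_lt_of_le (by omega) (le_refl n) (by omega)
    show 2*(k+1)*n + i < 2*(l+1)*n + i
    omega
  exact this.injective

lemma A1_phi (n i k : ℕ) (hn : 1 ≤ n) (hi : i ≤ n) :
    A1 n i (2*(k+1)*n - i) = (-1:ℝ)^(k+1) := by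
  have hi' : i ≤ 2*(k+1)*n := le_trans hi (le_mul_aux n k)
  have he : (2*(k+1)*n - i) + i = 2*n*(k+1) := by
    have : 2*(k+1)*n = 2*n*(k+1) := by ring
    omega
  rw [A1, if_pos, he, Nat.mul_div_cancel_left _ (by omega)]
  constructor
  · exact ⟨k+1, he⟩
  · have := le_mul_aux n k; omega

lemma A2_phi (n i k : ℕ) (hn : 1 ≤ n) (hi : i ≤ n) :
    A2 n i (2*(k+1)*n + i) = (-1:ℝ)^(k+1) := by
  have he : (2*(k+1)*n + i) - i = 2*n*(k+1) := by
    have : 2*(k+1)*n = 2*n*(k+1) := by ring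
    omega
  rw [A2, if_pos, he, Nat.mul_div_cancel_left _ (by omega)]
  constructor
  · have := le_mul_aux n k; omega
  · exact ⟨k+1, he⟩

lemma A1_supp (n i a : ℕ) (hn : 1 ≤ n) (hi : i ≤ n)
    (ha : A1 n i a ≠ 0) : ∃ k, 2*(k+1)*n - i = a := by
  rw [A1] at ha
  by_cases h : 2*n ∣ (a+i) ∧ a + i ≠ 0
  · obtain ⟨⟨K, hK⟩, h0⟩ := h
    have hK1 : 1 ≤ K := by
      rcases Nat.eq_zero_or_pos K with h' | h'
      · subst h'; omega
      · exact h'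
    refine ⟨K - 1, ?_⟩
    have : 2*((K-1)+1)*n = 2*n*K := by
      have h'' : (K-1)+1 = K := by omega
      rw [h'']; ring
    omega
  · rw [if_neg h] at ha; exact absurd rfl ha

lemma A2_supp (n i a : ℕ) (hn : 1 ≤ n) (hi : i ≤ n)
    (ha : A2 n i a ≠ 0) : ∃ k, 2*(k+1)*n + i = a := by
  rw [A2] at ha
  by_cases h : i < a ∧ 2*n ∣ (a-i)
  · obtain ⟨hlt, K, hK⟩ := h
    have hK1 : 1 ≤ K := by
      rcases Nat.eq_zero_or_pos K with h' | h'
      · subst h'; omega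
      · exact h'
    refine ⟨K - 1, ?_⟩
    have : 2*((K-1)+1)*n = 2*n*K := by
      have h'' : (K-1)+1 = K := by omega
      rw [h'']; ring
    omega
  · rw [if_neg h] at ha; exact absurd rfl ha

lemma tsum_A1 (n i : ℕ) (hn : 1 ≤ n) (hi : i ≤ n) (g : ℕ → ℝ)
    (hg : Summable fun a => |g a|) :
    (Summable fun a => A1 n i a * g a) ∧
    ∑' a, A1 n i a * g a = ∑' k, (-1:ℝ)^(k+1) * g (2*(k+1)*n - i) := by
  set φ := fun k => 2*(k+1)*n - i with hφ
  have hinj := phi1_inj n i hn hi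
  have hsupp : ∀ a, a ∉ Set.range φ → A1 n i a * g a = 0 := by
    intro a ha
    by_cases h0 : A1 n i a = 0
    · rw [h0]; ring
    · obtain ⟨k, hk⟩ := A1_supp n i a hn hi h0
      exact absurd ⟨k, hk⟩ ha
  have hcomp : ∀ k, A1 n i (φ k) * g (φ k) = (-1:ℝ)^(k+1) * g (φ k) := by
    intro k; rw [hφ]; rw [A1_phi n i k hn hi]
  have hsummc : Summable fun k => A1 n i (φ k) * g (φ k) := by
    apply Summable.of_norm_bounded ((hg.comp_injective hinj))
    intro k
    rw [hcomp k]
    simp [Real.norm_eq_abs, abs_mul, Function.comp]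
    exact le_rfl
  have hsumm : Summable fun a => A1 n i a * g a :=
    (Function.Injective.summable_iff hinj hsupp).1 hsummc
  refine ⟨hsumm, ?_⟩
  rw [← Function.Injective.tsum_eq hinj (f := fun a => A1 n i a * g a)]
  · exact tsum_congr hcomp
  · intro a ha
    simp only [Function.mem_support] at ha
    by_contra hr
    exact ha (hsupp a hr)

lemma tsum_A2 (n i : ℕ) (hn : 1 ≤ n) (hi : i ≤ n) (g : ℕ → ℝ)
    (hg : Summable fun a => |g a|) :
    (Summable fun a => A2 n i a * g a) ∧
    ∑' a, A2 n i a * g a = ∑' k, (-1:ℝ)^(k+1) * g (2*(k+1)*n + i) := by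
  set φ := fun k => 2*(k+1)*n + i with hφ
  have hinj := phi2_inj n i hn
  have hsupp : ∀ a, a ∉ Set.range φ → A2 n i a * g a = 0 := by
    intro a ha
    by_cases h0 : A2 n i a = 0
    · rw [h0]; ring
    · obtain ⟨k, hk⟩ := A2_supp n i a hn hi h0
      exact absurd ⟨k, hk⟩ ha
  have hcomp : ∀ k, A2 n i (φ k) * g (φ k) = (-1:ℝ)^(k+1) * g (φ k) := by
    intro k; rw [hφ]; rw [A2_phi n i k hn hi]
  have hsummc : Summable fun k => A2 n i (φ k) * g (φ k) := by
    apply Summable.of_norm_bounded ((hg.comp_injective hinj))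
    intro k
    rw [hcomp k]
    simp [Real.norm_eq_abs, abs_mul, Function.comp]
    exact le_rfl
  have hsumm : Summable fun a => A2 n i a * g a :=
    (Function.Injective.summable_iff hinj hsupp).1 hsummc
  refine ⟨hsumm, ?_⟩
  rw [← Function.Injective.tsum_eq hinj (f := fun a => A2 n i a * g a)]
  · exact tsum_congr hcomp
  · intro a ha
    simp only [Function.mem_support] at ha
    by_contra hr
    exact ha (hsupp a hr)

lemma summable_sign_comp (g : ℕ → ℝ)
    (hg : Summable fun a => |g a|) (φ : ℕ → ℕ) (hinj : Function.Injective φ) :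
    Summable fun k => (-1:ℝ)^(k+1) * g (φ k) := by
  apply Summable.of_norm_bounded (hg.comp_injective hinj)
  intro k
  simp [Real.norm_eq_abs, abs_mul, Function.comp]

lemma tsum_A (n i : ℕ) (hn : 1 ≤ n) (hi : i ≤ n) (g : ℕ → ℝ)
    (hg : Summable fun a => |g a|) :
    ∑' a, A n i a * g a
      = ∑' k, (-1:ℝ)^(k+1) * (g (2*(k+1)*n - i) + g (2*(k+1)*n + i)) := by
  obtain ⟨hs1, he1⟩ := tsum_A1 n i hn hi g hg
  obtain ⟨hs2, he2⟩ := tsum_A2 n i hn hi g hg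
  have h : ∀ a, A n i a * g a = A1 n i a * g a + A2 n i a * g a := by
    intro a; rw [A]; ring
  rw [tsum_congr h, Summable.tsum_add hs1 hs2, he1, he2,
    ← Summable.tsum_add (summable_sign_comp g hg _ (phi1_inj n i hn hi))
      (summable_sign_comp g hg _ (phi2_inj n i hn))]
  apply tsum_congr
  intro k
  ring

lemma summable_A_mul (n i : ℕ) (hn : 1 ≤ n) (hi : i ≤ n) (g : ℕ → ℝ)
    (hg : Summable fun a => |g a|) : Summable fun a => A n i a * g a := by
  have h : ∀ a, A n i a * g a = A1 n i a * g a + A2 n i a * g a := by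
    intro a; rw [A]; ring
  rw [show (fun a => A n i a * g a) = fun a => A1 n i a * g a + A2 n i a * g a
    from funext h]
  exact ((tsum_A1 n i hn hi g hg).1).add (tsum_A2 n i hn hi g hg).1

lemma A_abs_le (n i a : ℕ) : |A n i a| ≤ 2 := by
  rw [A, A1, A2]
  have h1 : ∀ (p : Prop) [Decidable p] (m : ℕ), |if p then (-1:ℝ)^m else 0| ≤ 1 := by
    intro p _ m
    split_ifs <;> simp [abs_pow]
  calc |_ + _| ≤ _ + _ := abs_add_le _ _
  _ ≤ 1 + 1 := add_le_add (h1 _ _) (h1 _ _)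
  _ = 2 := by norm_num

lemma summable_sign_pair (n j : ℕ) (hn : 1 ≤ n) (hj : j ≤ n) (g : ℕ → ℝ)
    (hg : Summable fun b => |g b|) :
    Summable fun k => (-1:ℝ)^(k+1) * (g (2*(k+1)*n - j) + g (2*(k+1)*n + j)) := by
  apply Summable.of_norm_bounded
    ((hg.comp_injective (phi1_inj n j hn hj)).add (hg.comp_injective (phi2_inj n j hn)))
  intro k
  simp only [Real.norm_eq_abs, abs_mul, abs_pow, abs_neg, abs_one, one_pow, one_mul,
    Function.comp]
  exact abs_add_le _ _

lemma summable_helper {c : ℕ × ℕ → ℝ} (hsum : Summable fun p => |c p|)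
    (m : ℕ × ℕ → ℝ) (M : ℝ) (hm : ∀ p, |m p| ≤ M) :
    Summable fun p => c p * m p := by
  apply Summable.of_norm_bounded (g := fun p => |c p| * M) (hsum.mul_right M)
  intro p
  rw [Real.norm_eq_abs, abs_mul]
  exact mul_le_mul_of_nonneg_left (hm p) (abs_nonneg _)

set_option maxHeartbeats 2000000 in
theorem bivariate_aliasing_identity
    (f : ℝ → ℝ → ℝ) (c : ℕ → ℕ → ℝ)
    (hsum : Summable fun p : ℕ × ℕ => |c p.1 p.2|)
    (hf : ∀ x ∈ Set.Icc (-1:ℝ) 1, ∀ y ∈ Set.Icc (-1:ℝ) 1,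
      f x y = ∑' i : ℕ, ∑' j : ℕ, w i * w j * c i j * T i x * T j y)
    (nx ny : ℕ) (hnx : 1 ≤ nx) (hny : 1 ≤ ny)
    (i j : ℕ) (hi : i ≤ nx) (hj : j ≤ ny) :
    ctilde f nx ny i j
      = c i j
        + (∑' kx : ℕ, (-1 : ℝ) ^ (kx + 1) *
            (c (2 * (kx + 1) * nx - i) j + c (2 * (kx + 1) * nx + i) j))
        + (∑' ky : ℕ, (-1 : ℝ) ^ (ky + 1) *
            (c i (2 * (ky + 1) * ny - j) + c i (2 * (ky + 1) * ny + j)))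
        + (∑' kx : ℕ, ∑' ky : ℕ, (-1 : ℝ) ^ ((kx + 1) + (ky + 1)) *
            (c (2 * (kx + 1) * nx - i) (2 * (ky + 1) * ny - j)
              + c (2 * (kx + 1) * nx - i) (2 * (ky + 1) * ny + j)
              + c (2 * (kx + 1) * nx + i) (2 * (ky + 1) * ny - j)
              + c (2 * (kx + 1) * nx + i) (2 * (ky + 1) * ny + j))) := by
  have hnx0 : (nx:ℝ) ≠ 0 := Nat.cast_ne_zero.2 (by omega)
  have hny0 : (ny:ℝ) ≠ 0 := Nat.cast_ne_zero.2 (by omega)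
  have hca : ∀ a, Summable fun b => |c a b| := fun a => hsum.prod_factor a
  have houter : Summable fun a => ∑' b, |c a b| :=
    ((summable_prod_of_nonneg (fun p => abs_nonneg _)).1 hsum).2
  have hcol : Summable fun a => |c a j| := by
    have hinj : Function.Injective (fun a : ℕ => (a, j)) := fun a b h =>
      (Prod.ext_iff.1 h).1
    exact hsum.comp_injective hinj
  have hbound4 : ∀ (a b : ℕ) (x y : ℝ), |w a * w b * T a x * T b y| ≤ 1 := by
    intro a b x y
    have h1 := w_abs_le a; have h2 := w_abs_le b
    have h3 := T_abs_le a x; have h4 := T_abs_le b y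
    calc |w a * w b * T a x * T b y|
        = |w a| * |w b| * |T a x| * |T b y| := by simp only [abs_mul]
      _ ≤ 1 * 1 * 1 * 1 := by gcongr
      _ = 1 := by norm_num
  have hbound5 : ∀ (a b : ℕ) (x y u v : ℝ),
      |w a * w b * T a x * T b y * (T i u * T j v)| ≤ 1 := by
    intro a b x y u v
    have h1 := hbound4 a b x y
    have h5 := T_abs_le i u; have h6 := T_abs_le j v
    calc |w a * w b * T a x * T b y * (T i u * T j v)|
        = |w a * w b * T a x * T b y| * (|T i u| * |T j v|) := by simp only [abs_mul]
      _ ≤ 1 * (1 * 1) := by gcongr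
      _ = 1 := by norm_num
  have hFs : ∀ (x y u v : ℝ), Summable (fun p : ℕ × ℕ =>
      c p.1 p.2 * (w p.1 * w p.2 * T p.1 x * T p.2 y * (T i u * T j v))) := by
    intro x y u v
    exact summable_helper hsum _ 1 (fun p => hbound5 p.1 p.2 x y u v)
  have hFs2 : ∀ (x y : ℝ), Summable (fun p : ℕ × ℕ =>
      w p.1 * w p.2 * c p.1 p.2 * T p.1 x * T p.2 y) := by
    intro x y
    have h := summable_helper hsum (fun p => w p.1 * w p.2 * T p.1 x * T p.2 y) 1
      (fun p => hbound4 p.1 p.2 x y)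
    exact h.congr (fun p => by ring)
  -- Step 1: the master identity
  have master : ctilde f nx ny i j
      = ∑' p : ℕ × ℕ, c p.1 p.2
          * ((if p.1 = i then (1:ℝ) else 0) + A nx i p.1)
          * ((if p.2 = j then (1:ℝ) else 0) + A ny j p.2) := by
    have hnode : ∀ lx ∈ Finset.Icc 1 nx, ∀ ly ∈ Finset.Icc 1 ny,
        f (chebNode nx lx) (chebNode ny ly) * T i (chebNode nx lx) * T j (chebNode ny ly)
          = ∑' p : ℕ × ℕ, c p.1 p.2 * (w p.1 * w p.2 * T p.1 (chebNode nx lx)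
              * T p.2 (chebNode ny ly)
              * (T i (chebNode nx lx) * T j (chebNode ny ly))) := by
      intro lx _ ly _
      set x := chebNode nx lx with hx
      set y := chebNode ny ly with hy
      rw [hf x (chebNode_mem nx lx) y (chebNode_mem ny ly)]
      have e1 : (∑' (a : ℕ), ∑' (b : ℕ), w a * w b * c a b * T a x * T b y)
          = ∑' p : ℕ × ℕ, w p.1 * w p.2 * c p.1 p.2 * T p.1 x * T p.2 y :=
        (Summable.tsum_prod' (hFs2 x y) (fun a => (hFs2 x y).prod_factor a)).symm
      rw [e1, mul_assoc, ← tsum_mul_right]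
      exact tsum_congr (fun p => by ring)
    rw [ctilde, Finset.sum_congr rfl (fun lx hlx =>
      Finset.sum_congr rfl (fun ly hly => hnode lx hlx ly hly))]
    -- swap the double finite sum with the tsum
    have e2 : ∀ lx ∈ Finset.Icc 1 nx,
        ∑ ly ∈ Finset.Icc 1 ny, ∑' p : ℕ × ℕ, c p.1 p.2 * (w p.1 * w p.2
            * T p.1 (chebNode nx lx) * T p.2 (chebNode ny ly)
            * (T i (chebNode nx lx) * T j (chebNode ny ly)))
          = ∑' p : ℕ × ℕ, ∑ ly ∈ Finset.Icc 1 ny, c p.1 p.2 * (w p.1 * w p.2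
            * T p.1 (chebNode nx lx) * T p.2 (chebNode ny ly)
            * (T i (chebNode nx lx) * T j (chebNode ny ly))) := by
      intro lx _
      exact (Summable.tsum_finsetSum (fun ly _ =>
        hFs (chebNode nx lx) (chebNode ny ly) (chebNode nx lx) (chebNode ny ly))).symm
    rw [Finset.sum_congr rfl e2]
    have e3 : ∑ lx ∈ Finset.Icc 1 nx, ∑' p : ℕ × ℕ, ∑ ly ∈ Finset.Icc 1 ny,
          c p.1 p.2 * (w p.1 * w p.2 * T p.1 (chebNode nx lx) * T p.2 (chebNode ny ly)
            * (T i (chebNode nx lx) * T j (chebNode ny ly)))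
        = ∑' p : ℕ × ℕ, ∑ lx ∈ Finset.Icc 1 nx, ∑ ly ∈ Finset.Icc 1 ny,
          c p.1 p.2 * (w p.1 * w p.2 * T p.1 (chebNode nx lx) * T p.2 (chebNode ny ly)
            * (T i (chebNode nx lx) * T j (chebNode ny ly))) := by
      exact (Summable.tsum_finsetSum (fun lx _ => summable_sum (fun ly _ =>
        hFs (chebNode nx lx) (chebNode ny ly) (chebNode nx lx) (chebNode ny ly)))).symm
    rw [e3, ← tsum_mul_left]
    apply tsum_congr
    intro p
    -- factor the double sum
    have e4 : ∑ lx ∈ Finset.Icc 1 nx, ∑ ly ∈ Finset.Icc 1 ny,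
          c p.1 p.2 * (w p.1 * w p.2 * T p.1 (chebNode nx lx) * T p.2 (chebNode ny ly)
            * (T i (chebNode nx lx) * T j (chebNode ny ly)))
        = c p.1 p.2 * w p.1 * w p.2
          * (∑ lx ∈ Finset.Icc 1 nx, T p.1 (chebNode nx lx) * T i (chebNode nx lx))
          * (∑ ly ∈ Finset.Icc 1 ny, T p.2 (chebNode ny ly) * T j (chebNode ny ly)) := by
      rw [Finset.sum_congr rfl (fun lx _ => Finset.sum_congr rfl (fun ly _ =>
        show c p.1 p.2 * (w p.1 * w p.2 * T p.1 (chebNode nx lx) * T p.2 (chebNode ny ly)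
            * (T i (chebNode nx lx) * T j (chebNode ny ly)))
          = (c p.1 p.2 * w p.1 * w p.2)
            * ((T p.1 (chebNode nx lx) * T i (chebNode nx lx))
              * (T p.2 (chebNode ny ly) * T j (chebNode ny ly))) from by ring))]
      simp only [← Finset.mul_sum]
      rw [← Finset.sum_mul]
      ring
    rw [e4]
    have hC : (4:ℝ) / ((nx:ℝ)*ny) = (2/(nx:ℝ)) * (2/(ny:ℝ)) := by
      rw [div_mul_div_comm]; norm_num
    have e5 : 4 / ((nx:ℝ)*ny) * (c p.1 p.2 * w p.1 * w p.2
          * (∑ lx ∈ Finset.Icc 1 nx, T p.1 (chebNode nx lx) * T i (chebNode nx lx))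
          * (∑ ly ∈ Finset.Icc 1 ny, T p.2 (chebNode ny ly) * T j (chebNode ny ly)))
        = c p.1 p.2
          * (w p.1 * ((2:ℝ)/nx * ∑ lx ∈ Finset.Icc 1 nx,
              T p.1 (chebNode nx lx) * T i (chebNode nx lx)))
          * (w p.2 * ((2:ℝ)/ny * ∑ ly ∈ Finset.Icc 1 ny,
              T p.2 (chebNode ny ly) * T j (chebNode ny ly))) := by
      rw [hC]; ring
    rw [e5, key nx i p.1 hnx hi, key ny j p.2 hny hj]
  -- Step 2: split and evaluate
  rw [master]
  have he1b : ∀ a : ℕ, |(if a = i then (1:ℝ) else 0)| ≤ 1 := by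
    intro a; split_ifs <;> norm_num
  have he2b : ∀ b : ℕ, |(if b = j then (1:ℝ) else 0)| ≤ 1 := by
    intro b; split_ifs <;> norm_num
  have ht1 : Summable (fun p : ℕ × ℕ => c p.1 p.2
      * ((if p.1 = i then (1:ℝ) else 0) * (if p.2 = j then (1:ℝ) else 0))) := by
    apply summable_helper hsum _ 1
    intro p
    rw [abs_mul]
    calc |(if p.1 = i then (1:ℝ) else 0)| * |(if p.2 = j then (1:ℝ) else 0)|
        ≤ 1 * 1 := mul_le_mul (he1b p.1) (he2b p.2) (abs_nonneg _) zero_le_one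
      _ = 1 := by norm_num
  have ht2 : Summable (fun p : ℕ × ℕ => c p.1 p.2
      * (A nx i p.1 * (if p.2 = j then (1:ℝ) else 0))) := by
    apply summable_helper hsum _ 2
    intro p
    rw [abs_mul]
    calc |A nx i p.1| * |(if p.2 = j then (1:ℝ) else 0)|
        ≤ 2 * 1 := mul_le_mul (A_abs_le _ _ _) (he2b p.2) (abs_nonneg _) (by norm_num)
      _ = 2 := by norm_num
  have ht3 : Summable (fun p : ℕ × ℕ => c p.1 p.2
      * ((if p.1 = i then (1:ℝ) else 0) * A ny j p.2)) := by
    apply summable_helper hsum _ 2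
    intro p
    rw [abs_mul]
    calc |(if p.1 = i then (1:ℝ) else 0)| * |A ny j p.2|
        ≤ 1 * 2 := mul_le_mul (he1b p.1) (A_abs_le _ _ _) (abs_nonneg _) zero_le_one
      _ = 2 := by norm_num
  have ht4 : Summable (fun p : ℕ × ℕ => c p.1 p.2 * (A nx i p.1 * A ny j p.2)) := by
    apply summable_helper hsum _ 4
    intro p
    rw [abs_mul]
    calc |A nx i p.1| * |A ny j p.2|
        ≤ 2 * 2 := mul_le_mul (A_abs_le _ _ _) (A_abs_le _ _ _) (abs_nonneg _) (by norm_num)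
      _ = 4 := by norm_num
  have hsplit : ∀ p : ℕ × ℕ, c p.1 p.2
        * ((if p.1 = i then (1:ℝ) else 0) + A nx i p.1)
        * ((if p.2 = j then (1:ℝ) else 0) + A ny j p.2)
      = c p.1 p.2 * ((if p.1 = i then (1:ℝ) else 0) * (if p.2 = j then (1:ℝ) else 0))
        + c p.1 p.2 * (A nx i p.1 * (if p.2 = j then (1:ℝ) else 0))
        + c p.1 p.2 * ((if p.1 = i then (1:ℝ) else 0) * A ny j p.2)
        + c p.1 p.2 * (A nx i p.1 * A ny j p.2) := by
    intro p; ring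
  rw [tsum_congr hsplit, Summable.tsum_add ((ht1.add ht2).add ht3) ht4,
    Summable.tsum_add (ht1.add ht2) ht3, Summable.tsum_add ht1 ht2]
  -- evaluate the four pieces
  have E1 : ∑' p : ℕ × ℕ, c p.1 p.2
      * ((if p.1 = i then (1:ℝ) else 0) * (if p.2 = j then (1:ℝ) else 0)) = c i j := by
    rw [tsum_eq_single ((i, j) : ℕ × ℕ)]
    · simp
    · intro p hp
      by_cases h1 : p.1 = i
      · have h2 : p.2 ≠ j := fun h2 => hp (Prod.ext h1 h2)
        simp [h2]
      · simp [h1]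
  have E2 : ∑' p : ℕ × ℕ, c p.1 p.2 * (A nx i p.1 * (if p.2 = j then (1:ℝ) else 0))
      = ∑' kx : ℕ, (-1 : ℝ) ^ (kx + 1) *
          (c (2 * (kx + 1) * nx - i) j + c (2 * (kx + 1) * nx + i) j) := by
    have h1 : ∑' p : ℕ × ℕ, c p.1 p.2 * (A nx i p.1 * (if p.2 = j then (1:ℝ) else 0))
        = ∑' a : ℕ, ∑' b : ℕ, c a b * (A nx i a * (if b = j then (1:ℝ) else 0)) :=
      Summable.tsum_prod' ht2 (fun a => ht2.prod_factor a)
    have h2 : ∀ a : ℕ, ∑' b : ℕ, c a b * (A nx i a * (if b = j then (1:ℝ) else 0))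
        = A nx i a * c a j := by
      intro a
      rw [tsum_eq_single j (fun b hb => by simp [hb])]
      simp; ring
    rw [h1, tsum_congr h2]
    exact tsum_A nx i hnx hi (fun a => c a j) hcol
  have E3 : ∑' p : ℕ × ℕ, c p.1 p.2 * ((if p.1 = i then (1:ℝ) else 0) * A ny j p.2)
      = ∑' ky : ℕ, (-1 : ℝ) ^ (ky + 1) *
          (c i (2 * (ky + 1) * ny - j) + c i (2 * (ky + 1) * ny + j)) := by
    have h1 : ∑' p : ℕ × ℕ, c p.1 p.2 * ((if p.1 = i then (1:ℝ) else 0) * A ny j p.2)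
        = ∑' a : ℕ, ∑' b : ℕ, c a b * ((if a = i then (1:ℝ) else 0) * A ny j b) :=
      Summable.tsum_prod' ht3 (fun a => ht3.prod_factor a)
    have h2 : ∀ a : ℕ, ∑' b : ℕ, c a b * ((if a = i then (1:ℝ) else 0) * A ny j b)
        = (if a = i then (1:ℝ) else 0) * ∑' b : ℕ, A ny j b * c a b := by
      intro a
      rw [← tsum_mul_left]
      exact tsum_congr (fun b => by ring)
    rw [h1, tsum_congr h2, tsum_eq_single i (fun a ha => by simp [ha]), if_pos rfl, one_mul]
    exact tsum_A ny j hny hj (c i) (hca i)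
  have E4 : ∑' p : ℕ × ℕ, c p.1 p.2 * (A nx i p.1 * A ny j p.2)
      = ∑' kx : ℕ, ∑' ky : ℕ, (-1 : ℝ) ^ ((kx + 1) + (ky + 1)) *
            (c (2 * (kx + 1) * nx - i) (2 * (ky + 1) * ny - j)
              + c (2 * (kx + 1) * nx - i) (2 * (ky + 1) * ny + j)
              + c (2 * (kx + 1) * nx + i) (2 * (ky + 1) * ny - j)
              + c (2 * (kx + 1) * nx + i) (2 * (ky + 1) * ny + j)) := by
    have h1 : ∑' p : ℕ × ℕ, c p.1 p.2 * (A nx i p.1 * A ny j p.2)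
        = ∑' a : ℕ, ∑' b : ℕ, c a b * (A nx i a * A ny j b) :=
      Summable.tsum_prod' ht4 (fun a => ht4.prod_factor a)
    have h2 : ∀ a : ℕ, ∑' b : ℕ, c a b * (A nx i a * A ny j b)
        = A nx i a * ∑' b : ℕ, A ny j b * c a b := by
      intro a
      rw [← tsum_mul_left]
      exact tsum_congr (fun b => by ring)
    have hgabs : Summable fun a => |∑' b : ℕ, A ny j b * c a b| := by
      apply Summable.of_nonneg_of_le (fun a => abs_nonneg _) _ (houter.mul_left 2)
      intro a
      have hsb : Summable fun b => |A ny j b * c a b| := by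
        apply Summable.of_nonneg_of_le (fun b => abs_nonneg _) _ ((hca a).mul_left 2)
        intro b
        rw [abs_mul]
        exact mul_le_mul_of_nonneg_right (A_abs_le _ _ _) (abs_nonneg _)
      calc |∑' b : ℕ, A ny j b * c a b| ≤ ∑' b : ℕ, |A ny j b * c a b| := by
            have := norm_tsum_le_tsum_norm (f := fun b => A ny j b * c a b)
              (by simpa only [Real.norm_eq_abs] using hsb)
            simpa only [Real.norm_eq_abs] using this
        _ ≤ ∑' b : ℕ, 2 * |c a b| := by
            apply Summable.tsum_le_tsum _ hsb ((hca a).mul_left 2)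
            intro b
            rw [abs_mul]
            exact mul_le_mul_of_nonneg_right (A_abs_le _ _ _) (abs_nonneg _)
        _ = 2 * ∑' b : ℕ, |c a b| := tsum_mul_left
    rw [h1, tsum_congr h2, tsum_A nx i hnx hi (fun a => ∑' b : ℕ, A ny j b * c a b) hgabs]
    apply tsum_congr
    intro kx
    have hgval : ∀ a : ℕ, (∑' b : ℕ, A ny j b * c a b)
        = ∑' ky : ℕ, (-1:ℝ)^(ky+1) * (c a (2*(ky+1)*ny - j) + c a (2*(ky+1)*ny + j)) :=
      fun a => tsum_A ny j hny hj (c a) (hca a)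
    rw [hgval, hgval,
      ← Summable.tsum_add (summable_sign_pair ny j hny hj (c (2*(kx+1)*nx - i)) (hca _))
        (summable_sign_pair ny j hny hj (c (2*(kx+1)*nx + i)) (hca _)),
      ← tsum_mul_left]
    apply tsum_congr
    intro ky
    rw [pow_add]
    ring
  rw [E1, E2, E3, E4]
end

section
/- Given a doubly-indexed absolutely summable family (c_{i,j}), integers d_x = n_x − l_x with 1 ≤ l_x ≤ n_x − k, and d_y = n_y − l_y with 1 ≤ l_y ≤ n_y − l, the aliasing error satisfies ∑'_{i=0}^{d_x} ∑'_{j=0}^{d_y} |c_{i,j} − c̃_{i,j}| ≤ 2 ∑_{i>d_x} ∑_{j>d_y} |c_{i,j}| + ∑'_{j=0}^{d_y} ∑_{i>d_x} |c_{i,j}| + ∑'_{i=0}^{d_x} ∑_{j>d_y} |c_{i,j}|, where c̃_{i,j} is defined from c_{i,j} via the bivariate aliasing identity. -/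
open Real Finset

/-- Aliased (discrete) coefficients built from an exact coefficient family via the
bivariate aliasing identity on an `n_x × n_y` Chebyshev grid. -/
noncomputable def aliased (c : ℕ → ℕ → ℝ) (nx ny i j : ℕ) : ℝ :=
  c i j
    + (∑' kx : ℕ, (-1 : ℝ) ^ (kx + 1) *
        (c (2 * (kx + 1) * nx - i) j + c (2 * (kx + 1) * nx + i) j))
    + (∑' ky : ℕ, (-1 : ℝ) ^ (ky + 1) *
        (c i (2 * (ky + 1) * ny - j) + c i (2 * (ky + 1) * ny + j)))
    + (∑' kx : ℕ, ∑' ky : ℕ, (-1 : ℝ) ^ ((kx + 1) + (ky + 1)) *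
        (c (2 * (kx + 1) * nx - i) (2 * (ky + 1) * ny - j)
          + c (2 * (kx + 1) * nx - i) (2 * (ky + 1) * ny + j)
          + c (2 * (kx + 1) * nx + i) (2 * (ky + 1) * ny - j)
          + c (2 * (kx + 1) * nx + i) (2 * (ky + 1) * ny + j)))

lemma w_nonneg (n : ℕ) : 0 ≤ w n := by unfold w; split <;> norm_num

lemma w_le_one (n : ℕ) : w n ≤ 1 := by unfold w; split <;> norm_num

lemma sum_w_pair (f : ℕ → ℝ) (a d : ℕ) (hd : d ≤ a) :
    ∑ i ∈ Finset.range (d+1), w i * (f (a - i) + f (a + i))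
      = ∑ m ∈ Finset.Icc (a - d) (a + d), f m := by
  induction d with
  | zero => simp [w]; ring
  | succ d ih =>
    have hd' : d ≤ a := by omega
    have hw : w (d+1) = 1 := by simp [w]
    rw [Finset.sum_range_succ, ih hd', hw, one_mul]
    have h2 : Finset.Icc (a - (d+1)) (a + (d+1))
        = insert (a - (d+1)) (insert (a + (d+1)) (Finset.Icc (a - d) (a + d))) := by
      ext m; simp only [Finset.mem_Icc, Finset.mem_insert]; omega
    rw [h2, Finset.sum_insert, Finset.sum_insert]
    · ring
    · simp only [Finset.mem_Icc]; omega
    · simp only [Finset.mem_insert, Finset.mem_Icc]; omega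

lemma inj_alias_sub {n i : ℕ} (hi : i < n) :
    Function.Injective (fun kk : ℕ => 2*(kk+1)*n - i) := by
  intro a b h
  simp only at h
  have ha : n ≤ 2*(a+1)*n := by
    calc n = 1*n := (one_mul n).symm
    _ ≤ 2*(a+1)*n := Nat.mul_le_mul_right n (by omega)
  have hb : n ≤ 2*(b+1)*n := by
    calc n = 1*n := (one_mul n).symm
    _ ≤ 2*(b+1)*n := Nat.mul_le_mul_right n (by omega)
  have heq : 2*(a+1)*n = 2*(b+1)*n := by omega
  have := Nat.eq_of_mul_eq_mul_right (show 0 < n by omega) heq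
  omega

lemma inj_alias_add {n : ℕ} (hn : 0 < n) (i : ℕ) :
    Function.Injective (fun kk : ℕ => 2*(kk+1)*n + i) := by
  intro a b h
  simp only at h
  have heq : 2*(a+1)*n = 2*(b+1)*n := by omega
  have := Nat.eq_of_mul_eq_mul_right hn heq
  omega

lemma tsum_Icc_le (f : ℕ → ℝ) (hf : ∀ n, 0 ≤ f n) (hs : Summable f)
    (n d : ℕ) (hdn : d + 1 ≤ n) :
    ∑' kk : ℕ, (∑ m ∈ Finset.Icc (2*(kk+1)*n - d) (2*(kk+1)*n + d), f m)
      ≤ ∑' m : ℕ, f (d + 1 + m) := by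
  have hmono : ∀ kk : ℕ, 2*n ≤ 2*(kk+1)*n := by
    intro kk
    calc 2*n = 2*1*n := by ring
    _ ≤ 2*(kk+1)*n := Nat.mul_le_mul_right n (by omega)
  have hgap : ∀ x y : ℕ, x < y → 2*(x+1)*n + 2*n ≤ 2*(y+1)*n := by
    intro x y hxy
    calc 2*(x+1)*n + 2*n = 2*(x+2)*n := by ring
    _ ≤ 2*(y+1)*n := Nat.mul_le_mul_right n (by omega)
  apply Real.tsum_le_of_sum_range_le
  · intro kk; exact Finset.sum_nonneg fun m _ => hf m
  intro K
  have hdisj : (↑(Finset.range K) : Set ℕ).PairwiseDisjoint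
      (fun kk => Finset.Icc (2*(kk+1)*n - d) (2*(kk+1)*n + d)) := by
    intro x _ y _ hxy
    apply Finset.disjoint_left.mpr
    intro m hmx hmy
    simp only [Finset.mem_Icc] at hmx hmy
    rcases Nat.lt_or_ge x y with h | h
    · have := hgap x y h; omega
    · have hyx : y < x := by omega
      have := hgap y x hyx; omega
  rw [← Finset.sum_biUnion hdisj]
  set s := (Finset.range K).biUnion
      (fun kk => Finset.Icc (2*(kk+1)*n - d) (2*(kk+1)*n + d)) with hs_def
  have hmem : ∀ m ∈ s, d + 1 ≤ m := by
    intro m hm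
    rcases Finset.mem_biUnion.mp hm with ⟨kk, _, hkk⟩
    simp only [Finset.mem_Icc] at hkk
    have := hmono kk; omega
  have hinj : Function.Injective (fun m : ℕ => d + 1 + m) := fun a b h => Nat.add_left_cancel h
  have hg : Summable (fun m : ℕ => f (d + 1 + m)) := by
    simpa [Function.comp_def] using hs.comp_injective hinj
  have hinjOn : ∀ a ∈ s, ∀ b ∈ s, a - (d+1) = b - (d+1) → a = b := by
    intro a ha b hb hab; have := hmem a ha; have := hmem b hb; omega
  have himg : ∑ m ∈ s.image (· - (d+1)), f (d + 1 + m)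
      = ∑ m ∈ s, f (d + 1 + (m - (d+1))) := Finset.sum_image hinjOn
  have himg2 : ∑ m ∈ s, f (d + 1 + (m - (d+1))) = ∑ m ∈ s, f m :=
    Finset.sum_congr rfl (fun m hm => by have := hmem m hm; congr 1; omega)
  rw [← himg2, ← himg]
  exact Summable.sum_le_tsum _ (fun m _ => hf _) hg

lemma key1D (f : ℕ → ℝ) (hf : ∀ m, 0 ≤ f m) (hs : Summable f)
    (n d : ℕ) (hdn : d + 1 ≤ n) :
    ∑ i ∈ Finset.range (d+1), w i *
        (∑' kk : ℕ, (f (2*(kk+1)*n - i) + f (2*(kk+1)*n + i)))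
      ≤ ∑' m : ℕ, f (d + 1 + m) := by
  have hsub : ∀ i ∈ Finset.range (d+1), Summable (fun kk : ℕ => f (2*(kk+1)*n - i)) := by
    intro i hi
    simp only [Finset.mem_range] at hi
    simpa [Function.comp_def] using hs.comp_injective (inj_alias_sub (show i < n by omega))
  have hadd : ∀ i, Summable (fun kk : ℕ => f (2*(kk+1)*n + i)) := by
    intro i
    simpa [Function.comp_def] using hs.comp_injective (inj_alias_add (show 0 < n by omega) i)
  have hsummand : ∀ i ∈ Finset.range (d+1),
      Summable (fun kk : ℕ => w i * (f (2*(kk+1)*n - i) + f (2*(kk+1)*n + i))) :=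
    fun i hi => (((hsub i hi).add (hadd i)).mul_left (w i))
  calc ∑ i ∈ Finset.range (d+1), w i * (∑' kk : ℕ, (f (2*(kk+1)*n - i) + f (2*(kk+1)*n + i)))
      = ∑ i ∈ Finset.range (d+1), ∑' kk : ℕ, w i * (f (2*(kk+1)*n - i) + f (2*(kk+1)*n + i)) :=
        Finset.sum_congr rfl (fun i _ => tsum_mul_left.symm)
    _ = ∑' kk : ℕ, ∑ i ∈ Finset.range (d+1), w i * (f (2*(kk+1)*n - i) + f (2*(kk+1)*n + i)) :=
        (Summable.tsum_finsetSum hsummand).symm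
    _ = ∑' kk : ℕ, ∑ m ∈ Finset.Icc (2*(kk+1)*n - d) (2*(kk+1)*n + d), f m := by
        apply tsum_congr
        intro kk
        apply sum_w_pair
        have : n ≤ 2*(kk+1)*n := by
          calc n = 1*n := (one_mul n).symm
          _ ≤ 2*(kk+1)*n := Nat.mul_le_mul_right n (by omega)
        omega
    _ ≤ ∑' m : ℕ, f (d + 1 + m) := tsum_Icc_le f hf hs n d hdn

lemma tsum_comp_le (f : ℕ → ℝ) (hf : ∀ n, 0 ≤ f n) (hs : Summable f)
    {g : ℕ → ℕ} (hg : Function.Injective g) :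
    ∑' k : ℕ, f (g k) ≤ ∑' n : ℕ, f n :=
  Summable.tsum_le_tsum_of_inj g hg (fun m _ => hf m) (fun _ => le_rfl)
    (by simpa [Function.comp_def] using hs.comp_injective hg) hs

lemma abs_tsum_le (g : ℕ → ℝ) (hg : Summable fun k => |g k|) :
    |∑' k : ℕ, g k| ≤ ∑' k : ℕ, |g k| := by
  simpa [Real.norm_eq_abs] using
    norm_tsum_le_tsum_norm (f := g) (by simpa [Real.norm_eq_abs] using hg)

lemma pointwise_bound (c : ℕ → ℕ → ℝ) (hsum : Summable fun p : ℕ × ℕ => |c p.1 p.2|)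
    (nx ny i j : ℕ) (hi : i < nx) (hj : j < ny) :
    |c i j - aliased c nx ny i j| ≤
      (∑' kk : ℕ, (|c (2*(kk+1)*nx - i) j| + |c (2*(kk+1)*nx + i) j|))
      + (∑' kk : ℕ, (|c i (2*(kk+1)*ny - j)| + |c i (2*(kk+1)*ny + j)|))
      + (∑' kx : ℕ,
          ((∑' ky : ℕ, (|c (2*(kx+1)*nx - i) (2*(ky+1)*ny - j)|
              + |c (2*(kx+1)*nx - i) (2*(ky+1)*ny + j)|))
          + (∑' ky : ℕ, (|c (2*(kx+1)*nx + i) (2*(ky+1)*ny - j)|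
              + |c (2*(kx+1)*nx + i) (2*(ky+1)*ny + j)|)))) := by
  have hrow : ∀ jj : ℕ, Summable fun ii => |c ii jj| := by
    intro jj
    have : Function.Injective (fun ii : ℕ => ((ii, jj) : ℕ × ℕ)) := by
      intro a b h; simpa using congrArg Prod.fst h
    simpa [Function.comp_def] using hsum.comp_injective this
  have hcol : ∀ ii : ℕ, Summable fun jj => |c ii jj| := by
    intro ii
    have : Function.Injective (fun jj : ℕ => ((ii, jj) : ℕ × ℕ)) := by
      intro a b h; simpa using congrArg Prod.snd h
    simpa [Function.comp_def] using hsum.comp_injective this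
  have hR : Summable fun x => ∑' y : ℕ, |c x y| :=
    ((summable_prod_of_nonneg (fun _ => abs_nonneg _)).mp hsum).2
  have habs2 : ∀ (m : ℕ) (x y : ℝ), |(-1:ℝ)^m * (x+y)| ≤ |x| + |y| := by
    intro m x y
    rw [abs_mul, abs_pow, abs_neg, abs_one, one_pow, one_mul]
    exact abs_add_le x y
  have habs4 : ∀ (m : ℕ) (x y z u : ℝ), |(-1:ℝ)^m * (x+y+z+u)| ≤ |x| + |y| + |z| + |u| := by
    intro m x y z u
    rw [abs_mul, abs_pow, abs_neg, abs_one, one_pow, one_mul]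
    calc |x+y+z+u| ≤ |x+y+z| + |u| := abs_add_le _ _
    _ ≤ (|x+y| + |z|) + |u| := by gcongr; exact abs_add_le _ _
    _ ≤ ((|x|+|y|) + |z|) + |u| := by gcongr; exact abs_add_le _ _
  have hnx : 0 < nx := by omega
  have hny : 0 < ny := by omega
  -- summability of the x-aliased rows
  have hsx1 : Summable fun kk : ℕ => |c (2*(kk+1)*nx - i) j| := by
    simpa [Function.comp_def] using (hrow j).comp_injective (inj_alias_sub hi)
  have hsx2 : Summable fun kk : ℕ => |c (2*(kk+1)*nx + i) j| := by
    simpa [Function.comp_def] using (hrow j).comp_injective (inj_alias_add hnx i)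
  have hsy1 : Summable fun kk : ℕ => |c i (2*(kk+1)*ny - j)| := by
    simpa [Function.comp_def] using (hcol i).comp_injective (inj_alias_sub hj)
  have hsy2 : Summable fun kk : ℕ => |c i (2*(kk+1)*ny + j)| := by
    simpa [Function.comp_def] using (hcol i).comp_injective (inj_alias_add hny j)
  have hky : ∀ x : ℕ, Summable fun ky : ℕ =>
      |c x (2*(ky+1)*ny - j)| + |c x (2*(ky+1)*ny + j)| := by
    intro x
    have h1 : Summable fun ky : ℕ => |c x (2*(ky+1)*ny - j)| := by
      simpa [Function.comp_def] using (hcol x).comp_injective (inj_alias_sub hj)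
    have h2 : Summable fun ky : ℕ => |c x (2*(ky+1)*ny + j)| := by
      simpa [Function.comp_def] using (hcol x).comp_injective (inj_alias_add hny j)
    exact h1.add h2
  -- the three signed tails
  set Sx : ℝ := ∑' kx : ℕ, (-1 : ℝ) ^ (kx + 1) *
      (c (2 * (kx + 1) * nx - i) j + c (2 * (kx + 1) * nx + i) j) with hSx
  set Sy : ℝ := ∑' ky : ℕ, (-1 : ℝ) ^ (ky + 1) *
      (c i (2 * (ky + 1) * ny - j) + c i (2 * (ky + 1) * ny + j)) with hSy
  set Sxy : ℝ := ∑' kx : ℕ, ∑' ky : ℕ, (-1 : ℝ) ^ ((kx + 1) + (ky + 1)) *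
      (c (2 * (kx + 1) * nx - i) (2 * (ky + 1) * ny - j)
        + c (2 * (kx + 1) * nx - i) (2 * (ky + 1) * ny + j)
        + c (2 * (kx + 1) * nx + i) (2 * (ky + 1) * ny - j)
        + c (2 * (kx + 1) * nx + i) (2 * (ky + 1) * ny + j)) with hSxy
  have hdiff : c i j - aliased c nx ny i j = -(Sx + Sy + Sxy) := by
    rw [hSx, hSy, hSxy]; unfold aliased; ring
  rw [hdiff, abs_neg]
  -- bound |Sx|
  have hbx : ∀ kk : ℕ, |(-1 : ℝ) ^ (kk + 1) *
      (c (2 * (kk + 1) * nx - i) j + c (2 * (kk + 1) * nx + i) j)|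
      ≤ |c (2*(kk+1)*nx - i) j| + |c (2*(kk+1)*nx + i) j| := fun kk => habs2 _ _ _
  have hbxs : Summable fun kk : ℕ => |(-1 : ℝ) ^ (kk + 1) *
      (c (2 * (kk + 1) * nx - i) j + c (2 * (kk + 1) * nx + i) j)| :=
    Summable.of_nonneg_of_le (fun _ => abs_nonneg _) hbx (hsx1.add hsx2)
  have hX : |Sx| ≤ ∑' kk : ℕ, (|c (2*(kk+1)*nx - i) j| + |c (2*(kk+1)*nx + i) j|) :=
    (abs_tsum_le _ hbxs).trans (Summable.tsum_le_tsum hbx hbxs (hsx1.add hsx2))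
  -- bound |Sy|
  have hby : ∀ kk : ℕ, |(-1 : ℝ) ^ (kk + 1) *
      (c i (2 * (kk + 1) * ny - j) + c i (2 * (kk + 1) * ny + j))|
      ≤ |c i (2*(kk+1)*ny - j)| + |c i (2*(kk+1)*ny + j)| := fun kk => habs2 _ _ _
  have hbys : Summable fun kk : ℕ => |(-1 : ℝ) ^ (kk + 1) *
      (c i (2 * (kk + 1) * ny - j) + c i (2 * (kk + 1) * ny + j))| :=
    Summable.of_nonneg_of_le (fun _ => abs_nonneg _) hby (hsy1.add hsy2)
  have hY : |Sy| ≤ ∑' kk : ℕ, (|c i (2*(kk+1)*ny - j)| + |c i (2*(kk+1)*ny + j)|) :=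
    (abs_tsum_le _ hbys).trans (Summable.tsum_le_tsum hby hbys (hsy1.add hsy2))
  -- bound |Sxy|
  set Q : ℕ → ℝ := fun kx =>
      (∑' ky : ℕ, (|c (2*(kx+1)*nx - i) (2*(ky+1)*ny - j)|
          + |c (2*(kx+1)*nx - i) (2*(ky+1)*ny + j)|))
      + (∑' ky : ℕ, (|c (2*(kx+1)*nx + i) (2*(ky+1)*ny - j)|
          + |c (2*(kx+1)*nx + i) (2*(ky+1)*ny + j)|)) with hQdef
  have hQle : ∀ kx : ℕ, |∑' ky : ℕ, (-1 : ℝ) ^ ((kx + 1) + (ky + 1)) *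
      (c (2 * (kx + 1) * nx - i) (2 * (ky + 1) * ny - j)
        + c (2 * (kx + 1) * nx - i) (2 * (ky + 1) * ny + j)
        + c (2 * (kx + 1) * nx + i) (2 * (ky + 1) * ny - j)
        + c (2 * (kx + 1) * nx + i) (2 * (ky + 1) * ny + j))| ≤ Q kx := by
    intro kx
    have hb : ∀ ky : ℕ, |(-1 : ℝ) ^ ((kx + 1) + (ky + 1)) *
        (c (2 * (kx + 1) * nx - i) (2 * (ky + 1) * ny - j)
          + c (2 * (kx + 1) * nx - i) (2 * (ky + 1) * ny + j)
          + c (2 * (kx + 1) * nx + i) (2 * (ky + 1) * ny - j)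
          + c (2 * (kx + 1) * nx + i) (2 * (ky + 1) * ny + j))|
        ≤ (|c (2*(kx+1)*nx - i) (2*(ky+1)*ny - j)| + |c (2*(kx+1)*nx - i) (2*(ky+1)*ny + j)|)
          + (|c (2*(kx+1)*nx + i) (2*(ky+1)*ny - j)| + |c (2*(kx+1)*nx + i) (2*(ky+1)*ny + j)|) := by
      intro ky
      have := habs4 ((kx+1)+(ky+1))
        (c (2 * (kx + 1) * nx - i) (2 * (ky + 1) * ny - j))
        (c (2 * (kx + 1) * nx - i) (2 * (ky + 1) * ny + j))
        (c (2 * (kx + 1) * nx + i) (2 * (ky + 1) * ny - j))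
        (c (2 * (kx + 1) * nx + i) (2 * (ky + 1) * ny + j))
      linarith
    have hsum4 : Summable fun ky : ℕ =>
        (|c (2*(kx+1)*nx - i) (2*(ky+1)*ny - j)| + |c (2*(kx+1)*nx - i) (2*(ky+1)*ny + j)|)
        + (|c (2*(kx+1)*nx + i) (2*(ky+1)*ny - j)| + |c (2*(kx+1)*nx + i) (2*(ky+1)*ny + j)|) :=
      (hky _).add (hky _)
    have hnorm : Summable fun ky : ℕ => |(-1 : ℝ) ^ ((kx + 1) + (ky + 1)) *
        (c (2 * (kx + 1) * nx - i) (2 * (ky + 1) * ny - j)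
          + c (2 * (kx + 1) * nx - i) (2 * (ky + 1) * ny + j)
          + c (2 * (kx + 1) * nx + i) (2 * (ky + 1) * ny - j)
          + c (2 * (kx + 1) * nx + i) (2 * (ky + 1) * ny + j))| :=
      Summable.of_nonneg_of_le (fun _ => abs_nonneg _) hb hsum4
    calc |∑' ky : ℕ, (-1 : ℝ) ^ ((kx + 1) + (ky + 1)) *
        (c (2 * (kx + 1) * nx - i) (2 * (ky + 1) * ny - j)
          + c (2 * (kx + 1) * nx - i) (2 * (ky + 1) * ny + j)
          + c (2 * (kx + 1) * nx + i) (2 * (ky + 1) * ny - j)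
          + c (2 * (kx + 1) * nx + i) (2 * (ky + 1) * ny + j))|
        ≤ ∑' ky : ℕ, |(-1 : ℝ) ^ ((kx + 1) + (ky + 1)) *
          (c (2 * (kx + 1) * nx - i) (2 * (ky + 1) * ny - j)
            + c (2 * (kx + 1) * nx - i) (2 * (ky + 1) * ny + j)
            + c (2 * (kx + 1) * nx + i) (2 * (ky + 1) * ny - j)
            + c (2 * (kx + 1) * nx + i) (2 * (ky + 1) * ny + j))| := abs_tsum_le _ hnorm
      _ ≤ ∑' ky : ℕ,
          ((|c (2*(kx+1)*nx - i) (2*(ky+1)*ny - j)| + |c (2*(kx+1)*nx - i) (2*(ky+1)*ny + j)|)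
          + (|c (2*(kx+1)*nx + i) (2*(ky+1)*ny - j)| + |c (2*(kx+1)*nx + i) (2*(ky+1)*ny + j)|)) :=
          Summable.tsum_le_tsum hb hnorm hsum4
      _ = Q kx := Summable.tsum_add (hky _) (hky _)
  have hQnonneg : ∀ kx, 0 ≤ Q kx := fun kx =>
    add_nonneg (tsum_nonneg fun _ => add_nonneg (abs_nonneg _) (abs_nonneg _))
      (tsum_nonneg fun _ => add_nonneg (abs_nonneg _) (abs_nonneg _))
  have hQsummable : Summable Q := by
    have hbound : ∀ kx : ℕ, Q kx ≤
        (∑' y : ℕ, |c (2*(kx+1)*nx - i) y|) + (∑' y : ℕ, |c (2*(kx+1)*nx - i) y|)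
        + ((∑' y : ℕ, |c (2*(kx+1)*nx + i) y|) + (∑' y : ℕ, |c (2*(kx+1)*nx + i) y|)) := by
      intro kx
      have e1 := Summable.tsum_add
        (by simpa [Function.comp_def] using
          (hcol (2*(kx+1)*nx - i)).comp_injective (inj_alias_sub hj))
        (by simpa [Function.comp_def] using
          (hcol (2*(kx+1)*nx - i)).comp_injective (inj_alias_add hny j))
      have e2 := Summable.tsum_add
        (by simpa [Function.comp_def] using
          (hcol (2*(kx+1)*nx + i)).comp_injective (inj_alias_sub hj))
        (by simpa [Function.comp_def] using
          (hcol (2*(kx+1)*nx + i)).comp_injective (inj_alias_add hny j))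
      rw [hQdef]
      dsimp only
      rw [e1, e2]
      apply add_le_add <;> apply add_le_add
      · exact tsum_comp_le _ (fun _ => abs_nonneg _) (hcol _) (inj_alias_sub hj)
      · exact tsum_comp_le _ (fun _ => abs_nonneg _) (hcol _) (inj_alias_add hny j)
      · exact tsum_comp_le _ (fun _ => abs_nonneg _) (hcol _) (inj_alias_sub hj)
      · exact tsum_comp_le _ (fun _ => abs_nonneg _) (hcol _) (inj_alias_add hny j)
    have hRa : Summable fun kx : ℕ => ∑' y : ℕ, |c (2*(kx+1)*nx - i) y| := by
      simpa [Function.comp_def] using hR.comp_injective (inj_alias_sub hi)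
    have hRb : Summable fun kx : ℕ => ∑' y : ℕ, |c (2*(kx+1)*nx + i) y| := by
      simpa [Function.comp_def] using hR.comp_injective (inj_alias_add hnx i)
    exact Summable.of_nonneg_of_le hQnonneg hbound (((hRa.add hRa)).add (hRb.add hRb))
  have hnormT : Summable fun kx : ℕ => |∑' ky : ℕ, (-1 : ℝ) ^ ((kx + 1) + (ky + 1)) *
      (c (2 * (kx + 1) * nx - i) (2 * (ky + 1) * ny - j)
        + c (2 * (kx + 1) * nx - i) (2 * (ky + 1) * ny + j)
        + c (2 * (kx + 1) * nx + i) (2 * (ky + 1) * ny - j)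
        + c (2 * (kx + 1) * nx + i) (2 * (ky + 1) * ny + j))| :=
    Summable.of_nonneg_of_le (fun _ => abs_nonneg _) hQle hQsummable
  have hXY : |Sxy| ≤ ∑' kx : ℕ, Q kx :=
    (abs_tsum_le _ hnormT).trans (Summable.tsum_le_tsum hQle hnormT hQsummable)
  calc |Sx + Sy + Sxy| ≤ |Sx| + |Sy| + |Sxy| := abs_add_three _ _ _
  _ ≤ _ := by
      apply add_le_add (add_le_add hX hY)
      exact hXY

theorem aliasing_error_bound
    (c : ℕ → ℕ → ℝ) (hsum : Summable fun p : ℕ × ℕ => |c p.1 p.2|)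
    (k l nx ny lx ly : ℕ)
    (hlx1 : 1 ≤ lx) (hlx2 : lx ≤ nx - k) (hly1 : 1 ≤ ly) (hly2 : ly ≤ ny - l)
    (dx dy : ℕ) (hdx : dx = nx - lx) (hdy : dy = ny - ly) :
    (∑ i ∈ Finset.range (dx + 1), ∑ j ∈ Finset.range (dy + 1),
        w i * w j * |c i j - aliased c nx ny i j|)
      ≤ 2 * (∑' i : ℕ, ∑' j : ℕ, |c (dx + 1 + i) (dy + 1 + j)|)
        + (∑ j ∈ Finset.range (dy + 1), w j * ∑' i : ℕ, |c (dx + 1 + i) j|)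
        + (∑ i ∈ Finset.range (dx + 1), w i * ∑' j : ℕ, |c i (dy + 1 + j)|) := by
  have hnxd : dx + 1 ≤ nx := by omega
  have hnyd : dy + 1 ≤ ny := by omega
  have hnx : 0 < nx := by omega
  have hny : 0 < ny := by omega
  have hrow : ∀ jj : ℕ, Summable fun ii => |c ii jj| := by
    intro jj
    have : Function.Injective (fun ii : ℕ => ((ii, jj) : ℕ × ℕ)) := by
      intro a b h; simpa using congrArg Prod.fst h
    simpa [Function.comp_def] using hsum.comp_injective this
  have hcol : ∀ ii : ℕ, Summable fun jj => |c ii jj| := by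
    intro ii
    have : Function.Injective (fun jj : ℕ => ((ii, jj) : ℕ × ℕ)) := by
      intro a b h; simpa using congrArg Prod.snd h
    simpa [Function.comp_def] using hsum.comp_injective this
  have hR : Summable fun x => ∑' y : ℕ, |c x y| :=
    ((summable_prod_of_nonneg (fun _ => abs_nonneg _)).mp hsum).2
  -- abbreviations
  set A : ℕ → ℕ → ℝ := fun i j =>
      ∑' kk : ℕ, (|c (2*(kk+1)*nx - i) j| + |c (2*(kk+1)*nx + i) j|) with hA
  set B : ℕ → ℕ → ℝ := fun i j =>
      ∑' kk : ℕ, (|c i (2*(kk+1)*ny - j)| + |c i (2*(kk+1)*ny + j)|) with hB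
  set G : ℕ → ℕ → ℝ := fun x j =>
      ∑' ky : ℕ, (|c x (2*(ky+1)*ny - j)| + |c x (2*(ky+1)*ny + j)|) with hG
  set QC : ℕ → ℕ → ℝ := fun i j =>
      ∑' kx : ℕ, (G (2*(kx+1)*nx - i) j + G (2*(kx+1)*nx + i) j) with hQC
  set H : ℕ → ℝ := fun x => ∑' m : ℕ, |c x (dy + 1 + m)| with hH
  -- pointwise bound
  have hpt : ∀ i ∈ Finset.range (dx+1), ∀ j ∈ Finset.range (dy+1),
      w i * w j * |c i j - aliased c nx ny i j| ≤ w i * w j * (A i j + B i j + QC i j) := by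
    intro i hi j hj
    simp only [Finset.mem_range] at hi hj
    apply mul_le_mul_of_nonneg_left _ (mul_nonneg (w_nonneg i) (w_nonneg j))
    have := pointwise_bound c hsum nx ny i j (by omega) (by omega)
    simpa only [hA, hB, hQC, hG] using this
  -- summability of G in the first variable
  have hGnonneg : ∀ x jj, 0 ≤ G x jj := fun x jj =>
    tsum_nonneg fun _ => add_nonneg (abs_nonneg _) (abs_nonneg _)
  have hGle : ∀ x jj, jj < ny → G x jj ≤ (∑' y : ℕ, |c x y|) + (∑' y : ℕ, |c x y|) := by
    intro x jj hjj
    have h1 : Summable fun ky : ℕ => |c x (2*(ky+1)*ny - jj)| := by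
      simpa [Function.comp_def] using (hcol x).comp_injective (inj_alias_sub hjj)
    have h2 : Summable fun ky : ℕ => |c x (2*(ky+1)*ny + jj)| := by
      simpa [Function.comp_def] using (hcol x).comp_injective (inj_alias_add hny jj)
    rw [hG]
    dsimp only
    rw [Summable.tsum_add h1 h2]
    apply add_le_add
    · exact tsum_comp_le _ (fun _ => abs_nonneg _) (hcol x) (inj_alias_sub hjj)
    · exact tsum_comp_le _ (fun _ => abs_nonneg _) (hcol x) (inj_alias_add hny jj)
  have hGsummable : ∀ jj, jj < ny → Summable fun x => G x jj := by
    intro jj hjj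
    exact Summable.of_nonneg_of_le (fun x => hGnonneg x jj)
      (fun x => hGle x jj hjj) (hR.add hR)
  -- summability of H
  have hHnonneg : ∀ x, 0 ≤ H x := fun x => tsum_nonneg fun _ => abs_nonneg _
  have hHle : ∀ x, H x ≤ ∑' y : ℕ, |c x y| := by
    intro x
    rw [hH]
    exact tsum_comp_le _ (fun _ => abs_nonneg _) (hcol x)
      (fun a b h => by exact Nat.add_left_cancel h)
  have hHsummable : Summable H := Summable.of_nonneg_of_le hHnonneg hHle hR
  -- Block A
  have hTA : ∑ i ∈ Finset.range (dx+1), ∑ j ∈ Finset.range (dy+1), w i * w j * A i j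
      ≤ ∑ j ∈ Finset.range (dy+1), w j * ∑' m : ℕ, |c (dx + 1 + m) j| := by
    rw [Finset.sum_comm]
    apply Finset.sum_le_sum
    intro j _
    have hinner : ∑ i ∈ Finset.range (dx+1), w i * A i j ≤ ∑' m : ℕ, |c (dx + 1 + m) j| :=
      key1D (fun x => |c x j|) (fun _ => abs_nonneg _) (hrow j) nx dx hnxd
    calc ∑ i ∈ Finset.range (dx+1), w i * w j * A i j
        = w j * ∑ i ∈ Finset.range (dx+1), w i * A i j := by
          rw [Finset.mul_sum]; exact Finset.sum_congr rfl fun i _ => by ring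
    _ ≤ w j * ∑' m : ℕ, |c (dx + 1 + m) j| :=
        mul_le_mul_of_nonneg_left hinner (w_nonneg j)
  -- Block B
  have hTB : ∑ i ∈ Finset.range (dx+1), ∑ j ∈ Finset.range (dy+1), w i * w j * B i j
      ≤ ∑ i ∈ Finset.range (dx+1), w i * ∑' m : ℕ, |c i (dy + 1 + m)| := by
    apply Finset.sum_le_sum
    intro i _
    have hinner : ∑ j ∈ Finset.range (dy+1), w j * B i j ≤ ∑' m : ℕ, |c i (dy + 1 + m)| :=
      key1D (fun y => |c i y|) (fun _ => abs_nonneg _) (hcol i) ny dy hnyd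
    calc ∑ j ∈ Finset.range (dy+1), w i * w j * B i j
        = w i * ∑ j ∈ Finset.range (dy+1), w j * B i j := by
          rw [Finset.mul_sum]; exact Finset.sum_congr rfl fun j _ => by ring
    _ ≤ w i * ∑' m : ℕ, |c i (dy + 1 + m)| :=
        mul_le_mul_of_nonneg_left hinner (w_nonneg i)
  -- Block C
  have hstep : ∀ i, i < nx → ∑ j ∈ Finset.range (dy+1), w j * QC i j
      ≤ ∑' kx : ℕ, (H (2*(kx+1)*nx - i) + H (2*(kx+1)*nx + i)) := by
    intro i hi
    have hsumm1 : ∀ jj, jj < ny → Summable fun kx : ℕ => G (2*(kx+1)*nx - i) jj := by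
      intro jj hjj
      simpa [Function.comp_def] using (hGsummable jj hjj).comp_injective (inj_alias_sub hi)
    have hsumm2 : ∀ jj, jj < ny → Summable fun kx : ℕ => G (2*(kx+1)*nx + i) jj := by
      intro jj hjj
      simpa [Function.comp_def] using (hGsummable jj hjj).comp_injective (inj_alias_add hnx i)
    have hsummand : ∀ j ∈ Finset.range (dy+1), Summable fun kx : ℕ =>
        w j * (G (2*(kx+1)*nx - i) j + G (2*(kx+1)*nx + i) j) := by
      intro j hj
      simp only [Finset.mem_range] at hj
      exact (((hsumm1 j (by omega)).add (hsumm2 j (by omega))).mul_left (w j))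
    have hswap : ∑ j ∈ Finset.range (dy+1), w j * QC i j
        = ∑' kx : ℕ, ∑ j ∈ Finset.range (dy+1),
            w j * (G (2*(kx+1)*nx - i) j + G (2*(kx+1)*nx + i) j) := by
      have e1 : ∀ j ∈ Finset.range (dy+1), w j * QC i j
          = ∑' kx : ℕ, w j * (G (2*(kx+1)*nx - i) j + G (2*(kx+1)*nx + i) j) := by
        intro j _
        rw [hQC]
        exact tsum_mul_left.symm
      rw [Finset.sum_congr rfl e1, ← Summable.tsum_finsetSum hsummand]
    rw [hswap]
    have hperk : ∀ kx : ℕ, ∑ j ∈ Finset.range (dy+1),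
        w j * (G (2*(kx+1)*nx - i) j + G (2*(kx+1)*nx + i) j)
        ≤ H (2*(kx+1)*nx - i) + H (2*(kx+1)*nx + i) := by
      intro kx
      have e : ∑ j ∈ Finset.range (dy+1),
          w j * (G (2*(kx+1)*nx - i) j + G (2*(kx+1)*nx + i) j)
          = (∑ j ∈ Finset.range (dy+1), w j * G (2*(kx+1)*nx - i) j)
            + (∑ j ∈ Finset.range (dy+1), w j * G (2*(kx+1)*nx + i) j) := by
        rw [← Finset.sum_add_distrib]
        exact Finset.sum_congr rfl fun j _ => by ring
      rw [e]
      apply add_le_add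
      · exact key1D (fun y => |c (2*(kx+1)*nx - i) y|) (fun _ => abs_nonneg _)
          (hcol _) ny dy hnyd
      · exact key1D (fun y => |c (2*(kx+1)*nx + i) y|) (fun _ => abs_nonneg _)
          (hcol _) ny dy hnyd
    apply Summable.tsum_le_tsum hperk
    · apply summable_sum
      intro j hj
      exact hsummand j hj
    · exact ((by simpa [Function.comp_def] using hHsummable.comp_injective (inj_alias_sub hi)
          : Summable fun kx : ℕ => H (2*(kx+1)*nx - i))).add
        (by simpa [Function.comp_def] using hHsummable.comp_injective (inj_alias_add hnx i))
  have hTC : ∑ i ∈ Finset.range (dx+1), ∑ j ∈ Finset.range (dy+1), w i * w j * QC i j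
      ≤ ∑' m : ℕ, H (dx + 1 + m) := by
    have h1 : ∀ i ∈ Finset.range (dx+1),
        ∑ j ∈ Finset.range (dy+1), w i * w j * QC i j
        ≤ w i * ∑' kx : ℕ, (H (2*(kx+1)*nx - i) + H (2*(kx+1)*nx + i)) := by
      intro i hi
      simp only [Finset.mem_range] at hi
      calc ∑ j ∈ Finset.range (dy+1), w i * w j * QC i j
          = w i * ∑ j ∈ Finset.range (dy+1), w j * QC i j := by
            rw [Finset.mul_sum]; exact Finset.sum_congr rfl fun j _ => by ring
      _ ≤ w i * ∑' kx : ℕ, (H (2*(kx+1)*nx - i) + H (2*(kx+1)*nx + i)) :=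
          mul_le_mul_of_nonneg_left (hstep i (by omega)) (w_nonneg i)
    calc ∑ i ∈ Finset.range (dx+1), ∑ j ∈ Finset.range (dy+1), w i * w j * QC i j
        ≤ ∑ i ∈ Finset.range (dx+1),
            w i * ∑' kx : ℕ, (H (2*(kx+1)*nx - i) + H (2*(kx+1)*nx + i)) :=
          Finset.sum_le_sum h1
    _ ≤ ∑' m : ℕ, H (dx + 1 + m) := key1D H hHnonneg hHsummable nx dx hnxd
  -- assemble
  have hD : ∑' m : ℕ, H (dx + 1 + m) = ∑' i : ℕ, ∑' j : ℕ, |c (dx + 1 + i) (dy + 1 + j)| := by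
    rw [hH]
  have hDnonneg : 0 ≤ ∑' m : ℕ, H (dx + 1 + m) := tsum_nonneg fun _ => hHnonneg _
  calc ∑ i ∈ Finset.range (dx + 1), ∑ j ∈ Finset.range (dy + 1),
        w i * w j * |c i j - aliased c nx ny i j|
      ≤ ∑ i ∈ Finset.range (dx+1), ∑ j ∈ Finset.range (dy+1),
          w i * w j * (A i j + B i j + QC i j) :=
        Finset.sum_le_sum fun i hi => Finset.sum_le_sum fun j hj => hpt i hi j hj
  _ = (∑ i ∈ Finset.range (dx+1), ∑ j ∈ Finset.range (dy+1), w i * w j * A i j)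
      + (∑ i ∈ Finset.range (dx+1), ∑ j ∈ Finset.range (dy+1), w i * w j * B i j)
      + (∑ i ∈ Finset.range (dx+1), ∑ j ∈ Finset.range (dy+1), w i * w j * QC i j) := by
      simp only [mul_add, Finset.sum_add_distrib]
  _ ≤ (∑ j ∈ Finset.range (dy+1), w j * ∑' m : ℕ, |c (dx + 1 + m) j|)
      + (∑ i ∈ Finset.range (dx+1), w i * ∑' m : ℕ, |c i (dy + 1 + m)|)
      + (∑' m : ℕ, H (dx + 1 + m)) := add_le_add (add_le_add hTA hTB) hTC
  _ ≤ 2 * (∑' i : ℕ, ∑' j : ℕ, |c (dx + 1 + i) (dy + 1 + j)|)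
      + (∑ j ∈ Finset.range (dy + 1), w j * ∑' i : ℕ, |c (dx + 1 + i) j|)
      + (∑ i ∈ Finset.range (dx + 1), w i * ∑' j : ℕ, |c i (dy + 1 + j)|) := by
      rw [← hD]; linarith
end
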